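/- Let 0 < a < b < 1, T > 0, and 0 < λ₁ < λ₂. Let φ₁, φ₂ ∈ L²(a,b) with ‖φ₂‖_{L²(a,b)} ≤ 1, and let h ∈ L²((a,b) × (0,T)). Define h_i(t) := ∫_a^b h(x,t) φ_i(x) dx for i = 1,2. Assume the moment relations ∫_0^T h₁(t) e^{λ₁ t} dt = 0 and ∫_0^T h₂(t) e^{λ₂ t} dt = 1. Then ‖h‖_{L²((a,b)×(0,T))} ≥ e^{-λ₂ T} / ( √T ( T (λ₂ - λ₁) + ‖φ₂ - φ₁‖_{L²(a,b)} ) ). -/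

import Mathlib

open MeasureTheory Set Filter


lemma l2_integrable_mul {α : Type*} [MeasurableSpace α] {μ : Measure α} {f g : α → ℝ}
    (hf : MemLp f 2 μ) (hg : MemLp g 2 μ) : Integrable (fun x => f x * g x) μ := by
  have h := L2.integrable_inner (𝕜 := ℝ) (hf.toLp f) (hg.toLp g)
  refine h.congr ?_
  filter_upwards [hf.coeFn_toLp, hg.coeFn_toLp] with x hx hy
  simp [hx, hy, RCLike.inner_apply, mul_comm]

lemma l2_cauchy_schwarz {α : Type*} [MeasurableSpace α] {μ : Measure α} {f g : α → ℝ}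
    (hf : MemLp f 2 μ) (hg : MemLp g 2 μ) :
    |∫ x, f x * g x ∂μ| ≤
      Real.sqrt (∫ x, f x ^ 2 ∂μ) * Real.sqrt (∫ x, g x ^ 2 ∂μ) := by
  have hinner : ∀ (u : α → ℝ) (hu : MemLp u 2 μ) (v : α → ℝ) (hv : MemLp v 2 μ),
      (inner ℝ (hu.toLp u) (hv.toLp v) : ℝ) = ∫ x, u x * v x ∂μ := by
    intro u hu v hv
    rw [L2.inner_def]
    refine integral_congr_ae ?_
    filter_upwards [hu.coeFn_toLp, hv.coeFn_toLp] with x hx hy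
    simp [hx, hy, RCLike.inner_apply, mul_comm]
  have hnorm : ∀ (u : α → ℝ) (hu : MemLp u 2 μ),
      ‖hu.toLp u‖ = Real.sqrt (∫ x, u x ^ 2 ∂μ) := by
    intro u hu
    have h1 : (inner ℝ (hu.toLp u) (hu.toLp u) : ℝ) = ∫ x, u x * u x ∂μ := hinner u hu u hu
    have h2 := real_inner_self_eq_norm_sq (hu.toLp u)
    have h3 : ∫ x, u x ^ 2 ∂μ = ‖hu.toLp u‖ ^ 2 := by
      rw [← h2, h1]; congr 1; ext x; ring
    rw [h3, Real.sqrt_sq (norm_nonneg _)]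
  calc |∫ x, f x * g x ∂μ| = |(inner ℝ (hf.toLp f) (hg.toLp g) : ℝ)| := by rw [hinner f hf g hg]
    _ ≤ ‖hf.toLp f‖ * ‖hg.toLp g‖ := abs_real_inner_le_norm _ _
    _ = _ := by rw [hnorm f hf, hnorm g hg]

lemma memLp_fst {α β : Type*} [MeasurableSpace α] [MeasurableSpace β]
    {μ : Measure α} {ν : Measure β} [SFinite μ] [SFinite ν] (hν : ν univ ≠ ⊤)
    {f : α → ℝ} (hf : MemLp f 2 μ) :
    MemLp (fun p : α × β => f p.1) 2 (μ.prod ν) := by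
  have hmap : Measure.map Prod.fst (μ.prod ν) = (ν univ) • μ := Measure.map_fst_prod
  have h1 : MemLp f 2 (Measure.map Prod.fst (μ.prod ν)) := by
    rw [hmap]; exact hf.smul_measure hν
  exact (memLp_map_measure_iff h1.aestronglyMeasurable measurable_fst.aemeasurable).1 h1

/-- Quantitative lower bound for the control norm from the
moment relations: if `0 < a < b < 1`, `T > 0`, `0 < λ₁ < λ₂`, `φ₁, φ₂ ∈ L²(a,b)`
with `‖φ₂‖_{L²(a,b)} ≤ 1`, `h ∈ L²((a,b)×(0,T))`, and the Fourier coefficients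
`h_i(t) = ∫_a^b h(x,t) φ_i(x) dx` satisfy `∫_0^T h₁(t) e^{λ₁ t} dt = 0` and
`∫_0^T h₂(t) e^{λ₂ t} dt = 1`, then
`‖h‖ ≥ e^{-λ₂ T} / (√T (T(λ₂-λ₁) + ‖φ₂-φ₁‖_{L²(a,b)}))`. -/
theorem stmt13 (a b T lam₁ lam₂ : ℝ)
    (ha : 0 < a) (hab : a < b) (hb : b < 1) (hT : 0 < T)
    (hl1 : 0 < lam₁) (hl12 : lam₁ < lam₂)
    (φ₁ φ₂ : ℝ → ℝ) (h : ℝ → ℝ → ℝ)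
    (hφ₁ : MemLp φ₁ 2 (volume.restrict (Ioo a b)))
    (hφ₂ : MemLp φ₂ 2 (volume.restrict (Ioo a b)))
    (hφ₂n : Real.sqrt (∫ x in Ioo a b, (φ₂ x) ^ 2) ≤ 1)
    (hh : MemLp (fun p : ℝ × ℝ => h p.1 p.2) 2
      (volume.restrict (Ioo a b ×ˢ Ioo 0 T)))
    (hm1 : (∫ t in Ioo (0 : ℝ) T,
      (∫ x in Ioo a b, h x t * φ₁ x) * Real.exp (lam₁ * t)) = 0)
    (hm2 : (∫ t in Ioo (0 : ℝ) T,
      (∫ x in Ioo a b, h x t * φ₂ x) * Real.exp (lam₂ * t)) = 1) :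
    Real.exp (-lam₂ * T) /
        (Real.sqrt T *
          (T * (lam₂ - lam₁) + Real.sqrt (∫ x in Ioo a b, (φ₂ x - φ₁ x) ^ 2))) ≤
      Real.sqrt (∫ p in Ioo a b ×ˢ Ioo (0 : ℝ) T, (h p.1 p.2) ^ 2) := by
  set μ : Measure ℝ := volume.restrict (Ioo a b) with hμdef
  set ν : Measure ℝ := volume.restrict (Ioo (0 : ℝ) T) with hνdef
  have hνuniv : ν univ = ENNReal.ofReal T := by
    rw [hνdef, Measure.restrict_apply_univ, Real.volume_Ioo, sub_zero]
  have hνfin : ν univ ≠ ⊤ := by rw [hνuniv]; exact ENNReal.ofReal_ne_top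
  haveI : IsFiniteMeasure ν := ⟨by rw [hνuniv]; exact ENNReal.ofReal_lt_top⟩
  have hprod : volume.restrict (Ioo a b ×ˢ Ioo (0 : ℝ) T) = μ.prod ν := by
    rw [hμdef, hνdef, Measure.prod_restrict, ← Measure.volume_eq_prod]
  rw [hprod] at hh ⊢
  -- abbreviations
  set D := Real.sqrt (∫ x, (φ₂ x - φ₁ x) ^ 2 ∂μ) with hDdef
  set E := Real.exp (lam₂ * T) with hEdef
  set N : ℝ → ℝ := fun t => Real.sqrt (∫ x, (h x t) ^ 2 ∂μ) with hNdef
  set R := Real.sqrt (∫ p, (h p.1 p.2) ^ 2 ∂(μ.prod ν)) with hRdef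
  have hEpos : 0 < E := Real.exp_pos _
  have hDnn : 0 ≤ D := Real.sqrt_nonneg _
  -- membership on product
  have hΦ₁ : MemLp (fun p : ℝ × ℝ => φ₁ p.1) 2 (μ.prod ν) := memLp_fst hνfin hφ₁
  have hΦ₂ : MemLp (fun p : ℝ × ℝ => φ₂ p.1) 2 (μ.prod ν) := memLp_fst hνfin hφ₂
  have hint1 : Integrable (fun p : ℝ × ℝ => h p.1 p.2 * φ₁ p.1) (μ.prod ν) :=
    l2_integrable_mul hh hΦ₁
  have hint2 : Integrable (fun p : ℝ × ℝ => h p.1 p.2 * φ₂ p.1) (μ.prod ν) :=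
    l2_integrable_mul hh hΦ₂
  have hg1int0 : Integrable (fun t => ∫ x, h x t * φ₁ x ∂μ) ν := by
    simpa using hint1.integral_prod_right
  have hg2int0 : Integrable (fun t => ∫ x, h x t * φ₂ x ∂μ) ν := by
    simpa using hint2.integral_prod_right
  -- ae facts on ν
  have hae : ∀ᵐ t ∂ν, t ∈ Ioo (0 : ℝ) T := by
    rw [hνdef]; exact ae_restrict_mem measurableSet_Ioo
  -- exponential estimates
  have hexp_le : ∀ t ∈ Ioo (0 : ℝ) T, Real.exp (lam₁ * t) ≤ E ∧
      Real.exp (lam₁ * t) ≤ Real.exp (lam₂ * t) ∧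
      Real.exp (lam₂ * t) - Real.exp (lam₁ * t) ≤ (lam₂ - lam₁) * T * E := by
    intro t ht
    obtain ⟨ht0, htT⟩ := ht
    have h1 : lam₁ * t ≤ lam₂ * t := by nlinarith
    have h2 : lam₂ * t ≤ lam₂ * T := by nlinarith
    have h3 : lam₁ * t ≤ lam₂ * T := h1.trans h2
    refine ⟨Real.exp_le_exp.2 h3, Real.exp_le_exp.2 h1, ?_⟩
    have hs : 0 ≤ lam₂ * t - lam₁ * t := by linarith
    have key : Real.exp (lam₂ * t) - Real.exp (lam₁ * t)
        ≤ (lam₂ * t - lam₁ * t) * Real.exp (lam₂ * t) := by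
      have h4 := Real.add_one_le_exp (-(lam₂ * t - lam₁ * t))
      have h5 : Real.exp (-(lam₂ * t - lam₁ * t)) * Real.exp (lam₂ * t)
          = Real.exp (lam₁ * t) := by
        rw [← Real.exp_add]; ring_nf
      nlinarith [Real.exp_pos (lam₂ * t)]
    have h6 : lam₂ * t - lam₁ * t ≤ (lam₂ - lam₁) * T := by nlinarith
    have h7 : Real.exp (lam₂ * t) ≤ E := Real.exp_le_exp.2 h2
    nlinarith [Real.exp_pos (lam₂ * t)]
  -- integrability of the moment integrands
  have hgint : ∀ (φ : ℝ → ℝ) (lam : ℝ), 0 < lam → lam ≤ lam₂ →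
      Integrable (fun t => ∫ x, h x t * φ x ∂μ) ν →
      Integrable (fun t => (∫ x, h x t * φ x ∂μ) * Real.exp (lam * t)) ν := by
    intro φ lam hlam hlam2 h0
    refine Integrable.mono' (h0.abs.mul_const E) ?_ ?_
    · exact h0.aestronglyMeasurable.mul
        ((Real.continuous_exp.comp (continuous_const.mul continuous_id)).aestronglyMeasurable)
    · filter_upwards [hae] with t ht
      obtain ⟨ht0, htT⟩ := ht
      have hle : lam * t ≤ lam₂ * T := by nlinarith
      have : Real.exp (lam * t) ≤ E := by rw [hEdef]; exact Real.exp_le_exp.2 hle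
      rw [Real.norm_eq_abs, abs_mul, abs_of_pos (Real.exp_pos _)]
      exact mul_le_mul_of_nonneg_left this (abs_nonneg _)
  have hg₁int : Integrable (fun t => (∫ x, h x t * φ₁ x ∂μ) * Real.exp (lam₁ * t)) ν :=
    hgint φ₁ lam₁ hl1 (le_of_lt hl12) hg1int0
  have hg₂int : Integrable (fun t => (∫ x, h x t * φ₂ x ∂μ) * Real.exp (lam₂ * t)) ν :=
    hgint φ₂ lam₂ (hl1.trans hl12) le_rfl hg2int0
  -- slice facts
  have hH2 : Integrable (fun p : ℝ × ℝ => (h p.1 p.2) ^ 2) (μ.prod ν) :=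
    (memLp_two_iff_integrable_sq hh.aestronglyMeasurable).1 hh
  have hsliceInt : ∀ᵐ t ∂ν, Integrable (fun x => (h x t) ^ 2) μ := hH2.prod_left_ae
  have hsliceMeas : ∀ᵐ t ∂ν, AEStronglyMeasurable (fun x => h x t) μ := by
    have hs := MeasureTheory.AEStronglyMeasurable.prod_swap
      (f := fun p : ℝ × ℝ => h p.1 p.2) (μ := ν) (ν := μ) hh.aestronglyMeasurable
    have hs' := hs.prodMk_left
    filter_upwards [hs'] with t ht using ht
  have hmem : ∀ᵐ t ∂ν, MemLp (fun x => h x t) 2 μ := by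
    filter_upwards [hsliceInt, hsliceMeas] with t h1 h2
    exact (memLp_two_iff_integrable_sq h2).2 h1
  -- constant
  set C := E * (T * (lam₂ - lam₁) + D) with hCdef
  have hTlam : 0 < T * (lam₂ - lam₁) := by nlinarith
  have hCpos : 0 < C := by
    rw [hCdef]; exact mul_pos hEpos (by linarith)
  -- key pointwise bound
  have hbound : ∀ᵐ t ∂ν,
      (∫ x, h x t * φ₂ x ∂μ) * Real.exp (lam₂ * t)
        - (∫ x, h x t * φ₁ x ∂μ) * Real.exp (lam₁ * t) ≤ C * N t := by
    filter_upwards [hmem, hae] with t hmt ht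
    have i1 : Integrable (fun x => h x t * φ₁ x) μ := l2_integrable_mul hmt hφ₁
    have i2 : Integrable (fun x => h x t * φ₂ x) μ := l2_integrable_mul hmt hφ₂
    have hNt : 0 ≤ N t := Real.sqrt_nonneg _
    have cs2 : |∫ x, h x t * φ₂ x ∂μ| ≤ N t := by
      have hcs := l2_cauchy_schwarz hmt hφ₂
      calc |∫ x, h x t * φ₂ x ∂μ| ≤ N t * Real.sqrt (∫ x, (φ₂ x) ^ 2 ∂μ) := hcs
        _ ≤ N t * 1 := mul_le_mul_of_nonneg_left hφ₂n hNt
        _ = N t := mul_one _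
    have csd : |∫ x, h x t * (φ₂ x - φ₁ x) ∂μ| ≤ N t * D := by
      have hcs := l2_cauchy_schwarz hmt (hφ₂.sub hφ₁)
      simpa using hcs
    have hsub : ∫ x, h x t * (φ₂ x - φ₁ x) ∂μ
        = (∫ x, h x t * φ₂ x ∂μ) - ∫ x, h x t * φ₁ x ∂μ := by
      rw [← integral_sub i2 i1]
      congr 1; ext x; ring
    obtain ⟨he1, he12, hediff⟩ := hexp_le t ht
    set A := ∫ x, h x t * φ₂ x ∂μ with hA
    set B := ∫ x, h x t * φ₁ x ∂μ with hB
    have hABd : |A - B| ≤ N t * D := by rw [← hsub]; exact csd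
    have e1pos : 0 < Real.exp (lam₁ * t) := Real.exp_pos _
    have hstep : A * Real.exp (lam₂ * t) - B * Real.exp (lam₁ * t)
        = A * (Real.exp (lam₂ * t) - Real.exp (lam₁ * t))
          + (A - B) * Real.exp (lam₁ * t) := by ring
    rw [hstep]
    have t1 : A * (Real.exp (lam₂ * t) - Real.exp (lam₁ * t))
        ≤ N t * ((lam₂ - lam₁) * T * E) := by
      calc A * (Real.exp (lam₂ * t) - Real.exp (lam₁ * t))
          ≤ |A| * (Real.exp (lam₂ * t) - Real.exp (lam₁ * t)) :=
            mul_le_mul_of_nonneg_right (le_abs_self A) (by linarith)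
        _ ≤ N t * ((lam₂ - lam₁) * T * E) := by
            apply mul_le_mul cs2 hediff (by linarith) hNt
    have t2 : (A - B) * Real.exp (lam₁ * t) ≤ (N t * D) * E := by
      calc (A - B) * Real.exp (lam₁ * t)
          ≤ |A - B| * Real.exp (lam₁ * t) :=
            mul_le_mul_of_nonneg_right (le_abs_self _) e1pos.le
        _ ≤ (N t * D) * E := by
            apply mul_le_mul hABd he1 e1pos.le (by positivity)
    calc A * (Real.exp (lam₂ * t) - Real.exp (lam₁ * t)) + (A - B) * Real.exp (lam₁ * t)
        ≤ N t * ((lam₂ - lam₁) * T * E) + (N t * D) * E := add_le_add t1 t2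
      _ = C * N t := by rw [hCdef]; ring
  -- N is in L²(ν)
  have hI2 : Integrable (fun t => ∫ x, (h x t) ^ 2 ∂μ) ν := by
    simpa using hH2.integral_prod_right
  have hNmeas : AEStronglyMeasurable N ν :=
    Real.continuous_sqrt.comp_aestronglyMeasurable hI2.aestronglyMeasurable
  have hNsq : ∀ t, N t ^ 2 = ∫ x, (h x t) ^ 2 ∂μ := fun t =>
    Real.sq_sqrt (integral_nonneg fun x => sq_nonneg _)
  have hNmem : MemLp N 2 ν := by
    refine (memLp_two_iff_integrable_sq hNmeas).2 ?_
    exact hI2.congr (Eventually.of_forall fun t => (hNsq t).symm)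
  have hNint : Integrable N ν := hNmem.integrable one_le_two
  -- main integral inequality
  have h1leq : (1 : ℝ) ≤ C * ∫ t, N t ∂ν := by
    have h0 : ∫ t, ((∫ x, h x t * φ₂ x ∂μ) * Real.exp (lam₂ * t)
        - (∫ x, h x t * φ₁ x ∂μ) * Real.exp (lam₁ * t)) ∂ν = 1 := by
      rw [integral_sub hg₂int hg₁int, hm2, hm1, sub_zero]
    have hmono := integral_mono_ae (hg₂int.sub hg₁int) (hNint.const_mul C) hbound
    simp only [Pi.sub_apply] at hmono
    rw [h0, integral_const_mul] at hmono
    exact hmono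
  -- Cauchy-Schwarz in time
  have hone : MemLp (fun _ : ℝ => (1 : ℝ)) 2 ν := memLp_const 1
  have hNsq_int : ∫ t, N t ^ 2 ∂ν = ∫ p, (h p.1 p.2) ^ 2 ∂(μ.prod ν) := by
    rw [MeasureTheory.integral_prod_symm _ hH2]
    simp only [hNsq]
  have hone_sq : ∫ t, (1 : ℝ) ^ 2 ∂ν = T := by
    simp [integral_const, measureReal_def, hνuniv, ENNReal.toReal_ofReal hT.le]
  have hNsum : ∫ t, N t ∂ν ≤ Real.sqrt T * R := by
    have hcs := l2_cauchy_schwarz hNmem hone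
    rw [hone_sq, hNsq_int, ← hRdef] at hcs
    calc ∫ t, N t ∂ν = ∫ t, N t * 1 ∂ν := by simp
      _ ≤ |∫ t, N t * 1 ∂ν| := le_abs_self _
      _ ≤ R * Real.sqrt T := hcs
      _ = Real.sqrt T * R := mul_comm _ _
  -- conclusion
  have hRnn : 0 ≤ R := Real.sqrt_nonneg _
  have hPpos : 0 < Real.sqrt T * (T * (lam₂ - lam₁) + D) :=
    mul_pos (Real.sqrt_pos.2 hT) (by linarith)
  rw [div_le_iff₀ hPpos]
  have hend : (1 : ℝ) ≤ C * (Real.sqrt T * R) := by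
    calc (1 : ℝ) ≤ C * ∫ t, N t ∂ν := h1leq
      _ ≤ C * (Real.sqrt T * R) := by
          exact mul_le_mul_of_nonneg_left hNsum hCpos.le
  have hEinv : Real.exp (-lam₂ * T) * E = 1 := by
    rw [hEdef, ← Real.exp_add]; ring_nf; exact Real.exp_zero
  have h9 := mul_le_mul_of_nonneg_left hend (Real.exp_pos (-lam₂ * T)).le
  have h10 : Real.exp (-lam₂ * T) * (C * (Real.sqrt T * R))
      = R * (Real.sqrt T * (T * (lam₂ - lam₁) + D)) := by
    rw [hCdef]
    calc Real.exp (-lam₂ * T) * (E * (T * (lam₂ - lam₁) + D) * (Real.sqrt T * R))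
        = (Real.exp (-lam₂ * T) * E) * ((T * (lam₂ - lam₁) + D) * (Real.sqrt T * R)) := by ring
      _ = R * (Real.sqrt T * (T * (lam₂ - lam₁) + D)) := by rw [hEinv]; ring
  rw [mul_one, h10] at h9
  exact h9
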